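/- If p is a polynomial of degree at most 2 on ℝ² whose average over each of the three edges of a nondegenerate triangle T vanishes and which vanishes at each of the three vertices of T, then p = 0. -/

import Mathlib

open MeasureTheory

noncomputable def lineP (p : MvPolynomial (Fin 2) ℝ) (a b : Fin 2 → ℝ) : Polynomial ℝ :=
  MvPolynomial.aeval (fun i => Polynomial.C (a i) + Polynomial.C (b i) * Polynomial.X) p

lemma eval_lineP (p : MvPolynomial (Fin 2) ℝ) (a b : Fin 2 → ℝ) (t : ℝ) :
    (lineP p a b).eval t = MvPolynomial.eval (fun i => a i + t * b i) p := by
  unfold lineP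
  induction p using MvPolynomial.induction_on with
  | C c => simp
  | add f g hf hg => simp [hf, hg]
  | mul_X f i hf => simp [hf]; exact Or.inl (mul_comm _ _)

lemma natDegree_lineP (p : MvPolynomial (Fin 2) ℝ) (a b : Fin 2 → ℝ) :
    (lineP p a b).natDegree ≤ p.totalDegree := by
  unfold lineP
  rw [MvPolynomial.aeval_def, MvPolynomial.eval₂_eq]
  apply Polynomial.natDegree_sum_le_of_forall_le
  intro d hd
  refine le_trans (Polynomial.natDegree_mul_le) ?_
  rw [Polynomial.algebraMap_eq, Polynomial.natDegree_C, zero_add]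
  refine le_trans (Polynomial.natDegree_prod_le d.support _) ?_
  refine le_trans (Finset.sum_le_sum (g := fun i => d i) ?_) ?_
  · intro i _
    refine le_trans Polynomial.natDegree_pow_le ?_
    have h1 : (Polynomial.C (a i) + Polynomial.C (b i) * Polynomial.X).natDegree ≤ 1 := by
      refine le_trans (Polynomial.natDegree_add_le _ _) ?_
      simp only [Polynomial.natDegree_C, max_le_iff]
      exact ⟨Nat.zero_le _, le_trans (Polynomial.natDegree_mul_le) (by simp)⟩
    nlinarith [h1]
  · exact MvPolynomial.le_totalDegree hd

lemma integ_quad (c0 c1 c2 : ℝ) :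
    (∫ t in (0:ℝ)..1, (c0 + c1*t + c2*t^2)) = c0 + c1/2 + c2/3 := by
  have h : ∀ t ∈ Set.uIcc (0:ℝ) 1,
      HasDerivAt (fun t : ℝ => c0*t + c1/2*t^2 + c2/3*t^3) (c0 + c1*t + c2*t^2) t := by
    intro t _
    have h1 := ((hasDerivAt_id t).const_mul c0).add
        (((hasDerivAt_pow 2 t).const_mul (c1/2)).add
          ((hasDerivAt_pow 3 t).const_mul (c2/3)))
    have e1 : (fun t : ℝ => c0*t + c1/2*t^2 + c2/3*t^3)
        = (fun y => c0 * id y) + ((fun y => c1 / 2 * y ^ 2) + fun y => c2 / 3 * y ^ 3) := by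
      funext u; simp only [id, Pi.add_apply]; ring
    have e2 : c0 + c1*t + c2*t^2
        = c0 * 1 + (c1 / 2 * ((2:ℕ) * t ^ (2 - 1)) + c2 / 3 * ((3:ℕ) * t ^ (3 - 1))) := by
      push_cast; ring
    rw [e1, e2]; exact h1
  rw [intervalIntegral.integral_eq_sub_of_hasDerivAt h
    (Continuous.intervalIntegrable (by continuity) _ _)]
  ring

lemma quad_zero (r : Polynomial ℝ) (hr : r.natDegree ≤ 2)
    (h0 : r.eval 0 = 0) (h1 : r.eval 1 = 0)
    (hint : (∫ t in (0:ℝ)..1, r.eval t) = 0) : r = 0 := by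
  have heval : ∀ t : ℝ, r.eval t = r.coeff 0 + r.coeff 1 * t + r.coeff 2 * t^2 := by
    intro t
    rw [Polynomial.eval_eq_sum_range' (n := 3) (by omega) t]
    simp [Finset.sum_range_succ]
  rw [show (fun t => r.eval t) = fun t => r.coeff 0 + r.coeff 1 * t + r.coeff 2 * t^2
    from funext heval, integ_quad] at hint
  rw [heval 0] at h0
  rw [heval 1] at h1
  have hc0 : r.coeff 0 = 0 := by linarith [h0]
  have hc1 : r.coeff 1 = 0 := by norm_num [hc0] at h1 hint; linarith
  have hc2 : r.coeff 2 = 0 := by norm_num [hc0, hc1] at h1 hint; linarith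
  apply Polynomial.zero_of_eval_zero
  intro t
  rw [heval t, hc0, hc1, hc2]
  ring

lemma surj3 (v : Fin 3 → (Fin 2 → ℝ)) (hv : AffineIndependent ℝ v) (x : Fin 2 → ℝ) :
    ∃ s t : ℝ, x = fun i => v 0 i + s * (v 1 i - v 0 i) + t * (v 2 i - v 0 i) := by
  have h := (affineIndependent_iff_linearIndependent_vsub ℝ v 0).mp hv
  have : Nonempty {x : Fin 3 // x ≠ (0:Fin 3)} := ⟨⟨1, by decide⟩⟩
  have hsp : Submodule.span ℝ
      (Set.range fun i : {x : Fin 3 // x ≠ (0:Fin 3)} => v i -ᵥ v 0) = ⊤ :=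
    h.span_eq_top_of_card_eq_finrank (by simp)
  have hran : (Set.range fun i : {x : Fin 3 // x ≠ (0:Fin 3)} => v i -ᵥ v 0)
      = {v 1 - v 0, v 2 - v 0} := by
    ext y
    constructor
    · rintro ⟨⟨i, hi⟩, rfl⟩
      fin_cases i
      · exact absurd rfl hi
      · left; rfl
      · right; rfl
    · rintro (rfl | rfl)
      · exact ⟨⟨1, by decide⟩, rfl⟩
      · exact ⟨⟨2, by decide⟩, rfl⟩
  rw [hran] at hsp
  have hx : x - v 0 ∈ Submodule.span ℝ ({v 1 - v 0, v 2 - v 0} : Set (Fin 2 → ℝ)) := by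
    rw [hsp]; trivial
  obtain ⟨a, b, hab⟩ := Submodule.mem_span_pair.mp hx
  refine ⟨a, b, ?_⟩
  funext i
  have := congrFun hab i
  simp [Pi.smul_apply] at this
  linarith [this]

lemma eval_pt_congr (p : MvPolynomial (Fin 2) ℝ) {x y : Fin 2 → ℝ} (h : ∀ i, x i = y i) :
    MvPolynomial.eval x p = MvPolynomial.eval y p := by rw [funext h]

theorem AF3_unisolvence
    (v : Fin 3 → (Fin 2 → ℝ)) (hv : AffineIndependent ℝ v)
    (p : MvPolynomial (Fin 2) ℝ) (hp : p.totalDegree ≤ 2)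
    (hedge : ∀ j : Fin 3,
      (∫ t in (0:ℝ)..1,
        MvPolynomial.eval (t • v (j + 1) + (1 - t) • v (j + 2)) p) = 0)
    (hvert : ∀ j : Fin 3, MvPolynomial.eval (v j) p = 0) :
    p = 0 := by
  classical
  -- p vanishes on the full line through v (j+1), v (j+2)
  have E : ∀ (j : Fin 3) (t : ℝ),
      MvPolynomial.eval (fun i => v (j+2) i + t * (v (j+1) i - v (j+2) i)) p = 0 := by
    intro j t
    set r := lineP p (v (j+2)) (fun i => v (j+1) i - v (j+2) i) with hrdef
    have he : ∀ u : ℝ, r.eval u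
        = MvPolynomial.eval (fun i => v (j+2) i + u * (v (j+1) i - v (j+2) i)) p :=
      fun u => eval_lineP p _ _ u
    have hdeg : r.natDegree ≤ 2 := le_trans (natDegree_lineP p _ _) hp
    have h0 : r.eval 0 = 0 := by
      rw [he]
      exact (eval_pt_congr p (fun i => by ring)).trans (hvert (j+2))
    have h1 : r.eval 1 = 0 := by
      rw [he]
      exact (eval_pt_congr p (fun i => by ring)).trans (hvert (j+1))
    have hpt : ∀ u : ℝ, r.eval u
        = MvPolynomial.eval (u • v (j + 1) + (1 - u) • v (j + 2)) p := by
      intro u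
      rw [he]
      exact eval_pt_congr p (fun i => by
        simp only [Pi.add_apply, Pi.smul_apply, smul_eq_mul]; ring)
    have hint : (∫ u in (0:ℝ)..1, r.eval u) = 0 := by
      rw [intervalIntegral.integral_congr (g := fun u =>
        MvPolynomial.eval (u • v (j + 1) + (1 - u) • v (j + 2)) p) (fun u _ => hpt u)]
      exact hedge j
    have hr0 : r = 0 := quad_zero r hdeg h0 h1 hint
    rw [← he t, hr0, Polynomial.eval_zero]
  apply MvPolynomial.funext
  intro x
  rw [map_zero]
  obtain ⟨s, t, rfl⟩ := surj3 v hv x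
  have e21 : ((2:Fin 3) + 1) = 0 := by decide
  have e22 : ((2:Fin 3) + 2) = 1 := by decide
  have e11 : ((1:Fin 3) + 1) = 2 := by decide
  have e12 : ((1:Fin 3) + 2) = 0 := by decide
  have e01 : ((0:Fin 3) + 1) = 1 := by decide
  have e02 : ((0:Fin 3) + 2) = 2 := by decide
  by_cases ht : t = 0
  · subst ht
    have h := E 2 (1 - s)
    rw [e21, e22] at h
    exact (eval_pt_congr p (fun i => by ring)).trans h
  by_cases hts : t = 1 ∧ s = 0
  · obtain ⟨ht1, hs0⟩ := hts
    subst ht1; subst hs0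
    exact (eval_pt_congr p (fun i => by ring)).trans (hvert 2)
  -- generic case
  obtain ⟨k, hk⟩ := Infinite.exists_notMem_finset ({0, 1, s, s + t, s / (1 - t)} : Finset ℝ)
  simp only [Finset.mem_insert, Finset.mem_singleton, not_or] at hk
  obtain ⟨hk0, hk1, hks, hkst, hkq⟩ := hk
  set m := (s - k) / t with hmdef
  have hmt : m * t = s - k := div_mul_cancel₀ _ ht
  have hm0 : m ≠ 0 := by
    intro h; rw [h, zero_mul] at hmt; exact hks (by linarith)
  have hm1 : m ≠ -1 := by
    intro h; rw [h] at hmt; exact hkst (by linarith)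
  have hm1' : 1 + m ≠ 0 := fun h => hm1 (by linarith)
  have hmk : m ≠ -k := by
    intro h
    rw [h] at hmt
    rcases eq_or_ne t 1 with h1 | h1
    · rw [h1, mul_one] at hmt
      exact hts ⟨h1, by linarith⟩
    · apply hkq
      rw [eq_div_iff (sub_ne_zero.mpr (Ne.symm h1))]
      nlinarith [hmt]
  set a : Fin 2 → ℝ := fun i => v 0 i + k * (v 1 i - v 0 i) with hadef
  set b : Fin 2 → ℝ := fun i => m * (v 1 i - v 0 i) + (v 2 i - v 0 i) with hbdef
  set r := lineP p a b with hrdef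
  have he : ∀ y : ℝ, r.eval y = MvPolynomial.eval (fun i => a i + y * b i) p :=
    fun y => eval_lineP p a b y
  have hdeg : r.natDegree ≤ 2 := le_trans (natDegree_lineP p a b) hp
  set y1 := -k / m with hy1def
  set y2 := (1 - k) / (1 + m) with hy2def
  have hy1m : y1 * m = -k := div_mul_cancel₀ _ hm0
  have hy2m : (1 + m) * y2 = 1 - k := mul_div_cancel₀ _ hm1'
  have hy1ne : y1 ≠ 0 := by
    intro h; rw [h, zero_mul] at hy1m; exact hk0 (by linarith)
  have hy2ne : y2 ≠ 0 := by
    intro h; rw [h, mul_zero] at hy2m; exact hk1 (by linarith)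
  have hy12 : y1 ≠ y2 := by
    intro h
    rw [h] at hy1m
    apply hmk
    have : m * ((1 + m) * y2) = (1 + m) * (y2 * m) := by ring
    rw [hy2m, hy1m] at this
    have h2 : m - m * k = -k - k * m := by linarith [this]
    linarith
  -- r vanishes at 0, y1, y2
  have hv0 : r.eval 0 = 0 := by
    rw [he]
    have h := E 2 (1 - k)
    rw [e21, e22] at h
    exact (eval_pt_congr p (fun i => by simp only [hadef, hbdef]; ring)).trans h
  have hv1 : r.eval y1 = 0 := by
    rw [he]
    have h := E 1 y1
    rw [e11, e12] at h
    exact (eval_pt_congr p (fun i => by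
      simp only [hadef, hbdef]
      linear_combination (v 1 i - v 0 i) * hy1m)).trans h
  have hv2 : r.eval y2 = 0 := by
    rw [he]
    have h := E 0 (m * y2 + k)
    rw [e01, e02] at h
    exact (eval_pt_congr p (fun i => by
      simp only [hadef, hbdef]
      linear_combination (v 2 i - v 0 i) * hy2m)).trans h
  have hr0 : r = 0 := by
    apply Polynomial.eq_zero_of_natDegree_lt_card_of_eval_eq_zero' r {0, y1, y2}
    · intro u hu
      simp only [Finset.mem_insert, Finset.mem_singleton] at hu
      rcases hu with rfl | rfl | rfl
      · exact hv0
      · exact hv1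
      · exact hv2
    · have hcard : ({0, y1, y2} : Finset ℝ).card = 3 := by
        rw [Finset.card_insert_of_notMem (by simp [hy1ne.symm, hy2ne.symm]),
          Finset.card_insert_of_notMem (by simp [hy12])]
        rfl
      omega
  have hfin := he t
  rw [hr0, Polynomial.eval_zero] at hfin
  exact (eval_pt_congr p (fun i => by
    simp only [hadef, hbdef]
    linear_combination (v 0 i - v 1 i) * hmt)).trans hfin.symm
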